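/- For every x ∈ [0,1]^m, the smoothed coverage objective satisfies F(x) ≥ (1 - 1/e)·L(x), where F(x) = Σ_{j∈[n]} w_j·(1 - Π_{i∈T_j}(1 - x_i)) and L(x) = Σ_{j∈[n]} w_j·min{1, Σ_{i∈T_j} x_i}. -/
import Mathlib


open Finset

lemma exp_key (s : ℝ) (hs : 0 ≤ s) :
    (1 - 1 / Real.exp 1) * min 1 s ≤ 1 - Real.exp (-s) := by
  rcases le_total 1 s with h | h
  · rw [min_eq_left h]
    have h1 : Real.exp (-s) ≤ (Real.exp 1)⁻¹ := by
      rw [← Real.exp_neg]; exact Real.exp_le_exp.2 (by linarith)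
    rw [mul_one, one_div]
    linarith
  · rw [min_eq_right h]
    have h2 : Real.exp (s * (-1) + (1 - s) * 0) ≤ s * Real.exp (-1) + (1 - s) * Real.exp 0 :=
      convexOn_exp.2 (Set.mem_univ (-1)) (Set.mem_univ 0) hs (by linarith) (by ring)
    simp only [mul_zero, add_zero, Real.exp_zero, mul_one] at h2
    rw [mul_neg_one, Real.exp_neg 1] at h2
    rw [one_div]
    nlinarith [h2]

/-- For every `x ∈ [0,1]^m`, the smoothed coverage objective satisfies
`F(x) ≥ (1 - 1/e) · L(x)`, where `F(x) = Σ_j w_j (1 - Π_{i ∈ T_j} (1 - x_i))` and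
`L(x) = Σ_j w_j · min {1, Σ_{i ∈ T_j} x_i}`. -/
theorem smoothed_coverage_lower_bound (n m : ℕ) (w : Fin n → ℝ) (hw : ∀ j, 0 ≤ w j)
    (S : Fin m → Finset (Fin n)) (x : Fin m → ℝ)
    (hx : ∀ i, 0 ≤ x i ∧ x i ≤ 1) :
    ∑ j, w j * (1 - ∏ i ∈ univ.filter (fun i => j ∈ S i), (1 - x i)) ≥
      (1 - 1 / Real.exp 1) *
        ∑ j, w j * min 1 (∑ i ∈ univ.filter (fun i => j ∈ S i), x i) := by
  rw [ge_iff_le, Finset.mul_sum]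
  apply Finset.sum_le_sum
  intro j _
  set T := univ.filter (fun i => j ∈ S i) with hT
  set s := ∑ i ∈ T, x i with hsdef
  have hs : 0 ≤ s := Finset.sum_nonneg fun i _ => (hx i).1
  have hP : ∏ i ∈ T, (1 - x i) ≤ Real.exp (-s) := by
    rw [hsdef, ← Finset.sum_neg_distrib, Real.exp_sum]
    apply Finset.prod_le_prod
    · intro i _; linarith [(hx i).2]
    · intro i _; exact Real.one_sub_le_exp_neg (x i)
  have key := exp_key s hs
  calc (1 - 1 / Real.exp 1) * (w j * min 1 s)
      = w j * ((1 - 1 / Real.exp 1) * min 1 s) := by ring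
    _ ≤ w j * (1 - Real.exp (-s)) := mul_le_mul_of_nonneg_left key (hw j)
    _ ≤ w j * (1 - ∏ i ∈ T, (1 - x i)) :=
        mul_le_mul_of_nonneg_left (by linarith) (hw j)
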